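/- Let (c_t)_{t∈ℕ} be nonnegative reals with t·c_t → L > 0 as t → ∞, and for β > 0 set T(β) = inf{t ∈ ℕ : c_t ≤ β}. Then limsup_{β→0⁺} β·T(β) ≤ L, i.e., limsup_{β→0⁺} T(β)/(L/β) ≤ 1. -/
import Mathlib


open Filter

/-- If `t·c_t → L > 0` and `T(β) = inf{t : c_t ≤ β}`, then
`limsup_{β→0⁺} β·T(β) ≤ L`. -/
theorem first_passage_limsup_le (c : ℕ → ℝ) (hc : ∀ t, 0 ≤ c t) (L : ℝ)
    (hL : 0 < L) (hlim : Tendsto (fun t : ℕ => (t : ℝ) * c t) atTop (nhds L)) :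
    limsup (fun β : ℝ => β * ((sInf {t : ℕ | c t ≤ β} : ℕ) : ℝ))
      (nhdsWithin 0 (Set.Ioi 0)) ≤ L := by
  have hcb : IsCoboundedUnder (· ≤ ·) (nhdsWithin (0:ℝ) (Set.Ioi 0))
      (fun β : ℝ => β * ((sInf {t : ℕ | c t ≤ β} : ℕ) : ℝ)) := by
    refine isCoboundedUnder_le_of_eventually_le (x := (0:ℝ)) _ ?_
    filter_upwards [self_mem_nhdsWithin] with β hβ
    exact mul_nonneg (le_of_lt hβ) (Nat.cast_nonneg _)
  refine le_of_forall_pos_le_add fun ε hε => ?_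
  refine limsup_le_of_le hcb ?_
  -- get N such that for t ≥ N, t * c t ≤ L + ε/2
  have hev : ∀ᶠ t : ℕ in atTop, (t : ℝ) * c t ≤ L + ε / 2 :=
    hlim.eventually (eventually_le_nhds (by linarith))
  obtain ⟨N, hN⟩ := eventually_atTop.mp hev
  have hδ : (0:ℝ) < ε / (2 * ((N : ℝ) + 2)) := by positivity
  filter_upwards [Ioo_mem_nhdsGT_of_mem (Set.mem_Ico.mpr ⟨le_refl (0:ℝ), hδ⟩)]
    with β hβ
  obtain ⟨hβ0, hβδ⟩ := hβ
  set x : ℝ := (L + ε / 2) / β with hx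
  have hx0 : 0 < x := div_pos (by linarith) hβ0
  set t₀ : ℕ := max (N + 1) ⌈x⌉₊ with ht₀
  have ht₀N : N ≤ t₀ := le_trans (Nat.le_succ N) (le_max_left _ _)
  have ht₀x : x ≤ (t₀ : ℝ) := le_trans (Nat.le_ceil x)
    (Nat.cast_le.mpr (le_max_right _ _))
  have ht₀pos : 0 < (t₀ : ℝ) := lt_of_lt_of_le hx0 ht₀x
  have hct₀ : c t₀ ≤ β := by
    have h1 : (t₀ : ℝ) * c t₀ ≤ L + ε / 2 := hN t₀ ht₀N
    have h2 : (L + ε / 2) ≤ (t₀ : ℝ) * β := by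
      have hxβ : x * β = L + ε / 2 := div_mul_cancel₀ _ (ne_of_gt hβ0)
      nlinarith
    nlinarith
  have hmem : t₀ ∈ {t : ℕ | c t ≤ β} := hct₀
  have hinf : (sInf {t : ℕ | c t ≤ β} : ℕ) ≤ t₀ := Nat.sInf_le hmem
  have ht₀le : (t₀ : ℝ) ≤ x + (N : ℝ) + 2 := by
    have hceil : (⌈x⌉₊ : ℝ) < x + 1 := Nat.ceil_lt_add_one hx0.le
    have hmax : (t₀ : ℝ) ≤ (N : ℝ) + 1 + (⌈x⌉₊ : ℝ) := by
      have : t₀ ≤ (N + 1) + ⌈x⌉₊ := le_trans (max_le_iff.mpr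
        ⟨Nat.le_add_right _ _, Nat.le_add_left _ _⟩) (le_refl _)
      exact_mod_cast this
    linarith
  calc β * ((sInf {t : ℕ | c t ≤ β} : ℕ) : ℝ)
      ≤ β * (t₀ : ℝ) := by
        exact mul_le_mul_of_nonneg_left (Nat.cast_le.mpr hinf) hβ0.le
    _ ≤ β * (x + (N : ℝ) + 2) := mul_le_mul_of_nonneg_left ht₀le hβ0.le
    _ = (L + ε / 2) + β * ((N : ℝ) + 2) := by
        have hxβ : β * x = L + ε / 2 := mul_div_cancel₀ _ (ne_of_gt hβ0)
        nlinarith [hxβ]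
    _ ≤ L + ε := by
        have : β * ((N : ℝ) + 2) ≤ ε / 2 := by
          rw [lt_div_iff₀ (by positivity : (0:ℝ) < 2 * ((N:ℝ)+2))] at hβδ
          nlinarith
        linarith
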